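/- Let F be a finite field of characteristic at least 5, let a, b ∈ F satisfy 4a³ + 27b² ≠ 0, and for coefficients (a', b') with 4a'³ + 27b'² ≠ 0 let N(a', b') = 1 + #{(x, y) ∈ F × F : y² = x³ + a'x + b'} denote the number of points (including the point at infinity) of the elliptic curve y² = x³ + a'x + b' over F. Let c ∈ F be nonzero. Then 4(c²a)³ + 27(c³b)² ≠ 0, and: (i) if c is a square in F, then N(c²a, c³b) = N(a, b); (ii) if c is not a square in F, then N(c²a, c³b) + N(a, b) = 2(#F + 1). -/
import Mathlib

/-- The number of points (including the point at infinity) of the elliptic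
curve `y² = x³ + a'x + b'` over a field `F`. -/
noncomputable def numPoints (F : Type*) [Field F] (a' b' : F) : ℕ :=
  1 + Nat.card {pt : F × F // pt.2 ^ 2 = pt.1 ^ 3 + a' * pt.1 + b'}

open Finset in
lemma numPoints_eq_charSum {F : Type*} [Field F] [Fintype F] [DecidableEq F]
    (h2 : ringChar F ≠ 2) (a' b' : F) :
    (numPoints F a' b' : ℤ) =
      (Fintype.card F : ℤ) + 1 + ∑ x : F, quadraticChar F (x ^ 3 + a' * x + b') := by
  have hcard : Nat.card {pt : F × F // pt.2 ^ 2 = pt.1 ^ 3 + a' * pt.1 + b'} =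
      ∑ x : F, Fintype.card {y : F // y ^ 2 = x ^ 3 + a' * x + b'} := by
    rw [Nat.card_eq_fintype_card,
      Fintype.card_congr
        (Equiv.subtypeProdEquivSigmaSubtype fun x y : F => y ^ 2 = x ^ 3 + a' * x + b'),
      Fintype.card_sigma]
  have hsq : ∀ x : F, (Fintype.card {y : F // y ^ 2 = x ^ 3 + a' * x + b'} : ℤ) =
      quadraticChar F (x ^ 3 + a' * x + b') + 1 := by
    intro x
    have := quadraticChar_card_sqrts h2 (x ^ 3 + a' * x + b')
    rwa [Set.toFinset_card] at this
  unfold numPoints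
  rw [hcard]
  push_cast
  rw [Finset.sum_congr rfl fun x _ => hsq x, Finset.sum_add_distrib]
  simp [Finset.card_univ]
  ring

theorem stmt_12 {F : Type*} [Field F] [Fintype F] (hchar : 5 ≤ ringChar F)
    (a b : F) (hab : 4 * a ^ 3 + 27 * b ^ 2 ≠ 0)
    (c : F) (hc : c ≠ 0) :
    4 * (c ^ 2 * a) ^ 3 + 27 * (c ^ 3 * b) ^ 2 ≠ 0 ∧
    ((∃ e : F, c = e ^ 2) →
      numPoints F (c ^ 2 * a) (c ^ 3 * b) = numPoints F a b) ∧
    (¬ (∃ e : F, c = e ^ 2) →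
      numPoints F (c ^ 2 * a) (c ^ 3 * b) + numPoints F a b =
        2 * (Fintype.card F + 1)) := by
  classical
  have h2 : ringChar F ≠ 2 := by omega
  have hdisc : 4 * (c ^ 2 * a) ^ 3 + 27 * (c ^ 3 * b) ^ 2 =
      c ^ 6 * (4 * a ^ 3 + 27 * b ^ 2) := by ring
  -- twist of the character sum
  have hχc : (quadraticChar F c) ^ 2 = 1 := quadraticChar_sq_one hc
  have hsum : ∑ x : F, quadraticChar F (x ^ 3 + (c ^ 2 * a) * x + c ^ 3 * b) =
      quadraticChar F c * ∑ x : F, quadraticChar F (x ^ 3 + a * x + b) := by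
    rw [Finset.mul_sum]
    refine (Fintype.sum_equiv (Equiv.mulLeft₀ c hc) _ _ fun u => ?_).symm
    have he : (Equiv.mulLeft₀ c hc) u = c * u := rfl
    rw [he]
    have heq : (c * u) ^ 3 + (c ^ 2 * a) * (c * u) + c ^ 3 * b =
        c ^ 3 * (u ^ 3 + a * u + b) := by ring
    rw [heq, map_mul, map_pow]
    have h3 : (quadraticChar F c) ^ 3 = quadraticChar F c := by
      rw [pow_succ, hχc, one_mul]
    rw [h3]
  have hA := numPoints_eq_charSum (F := F) h2 (c ^ 2 * a) (c ^ 3 * b)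
  have hB := numPoints_eq_charSum (F := F) h2 a b
  refine ⟨by
    rw [hdisc]
    exact mul_ne_zero (pow_ne_zero _ hc) hab, ?_, ?_⟩
  · rintro ⟨e, rfl⟩
    have hsq : IsSquare (e ^ 2) := ⟨e, sq e⟩
    have hχ1 : quadraticChar F (e ^ 2) = 1 :=
      (quadraticChar_one_iff_isSquare hc).mpr hsq
    have : (numPoints F ((e ^ 2) ^ 2 * a) ((e ^ 2) ^ 3 * b) : ℤ) = (numPoints F a b : ℤ) := by
      rw [hA, hB, hsum, hχ1, one_mul]
    exact_mod_cast this
  · intro hns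
    have hns' : ¬ IsSquare c := by
      rintro ⟨e, rfl⟩
      exact hns ⟨e, (sq e).symm⟩
    have hχ : quadraticChar F c = -1 :=
      quadraticChar_neg_one_iff_not_isSquare.mpr hns'
    have : (numPoints F (c ^ 2 * a) (c ^ 3 * b) : ℤ) + (numPoints F a b : ℤ) =
        2 * ((Fintype.card F : ℤ) + 1) := by
      rw [hA, hB, hsum, hχ]
      ring
    exact_mod_cast this
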